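/- Assume the matching conditions hold and the decoder is driven by the attacked encoder output, v(k) = u_e(k) + L_a a_u(k), where L_a is the m×m_a matrix whose columns are distinct standard basis vectors of ℝ^m and a_u : ℕ → ℝ^{m_a}. Then for every input sequence u : ℕ → ℝ^m and every k ≥ 0: u_d(k) = u(k) + D_d L_a a_u(k) + Σ_{j=0}^{k−1} C_d A_d^{k−1−j} B_d L_a a_u(j). -/

import Mathlib

open Matrix Finset

private lemma mulVec_sum' {m : ℕ} (A : Matrix (Fin m) (Fin m) ℝ) (s : Finset ℕ)
    (f : ℕ → Fin m → ℝ) :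
    A.mulVec (∑ j ∈ s, f j) = ∑ j ∈ s, A.mulVec (f j) := by
  classical
  induction s using Finset.induction_on with
  | empty => simp
  | insert a s h ih => simp [Finset.sum_insert h, Matrix.mulVec_add, ih]

/-- Under the matching conditions, when the decoder is driven by the
attacked encoder output `v(k) = u_e(k) + Lₐ a_u(k)`, the decoder output satisfies
`u_d(k) = u(k) + D_d Lₐ a_u(k) + Σ_{j<k} C_d A_d^{k-1-j} B_d Lₐ a_u(j)`. -/
theorem decoder_output_under_attack
    (m ma : ℕ) (hma1 : 1 ≤ ma) (hmam : ma ≤ m)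
    (Ae Be Ce De Ad Bd Cd Dd T : Matrix (Fin m) (Fin m) ℝ)
    (hT : IsUnit T) (hDe : IsUnit De)
    (hDd : Dd = De⁻¹)
    (hC : Dd * Ce + Cd * T = 0)
    (hB : T⁻¹ * Bd * De = Be)
    (hA : T⁻¹ * Ad * T + T⁻¹ * Bd * Ce = Ae)
    (La : Matrix (Fin m) (Fin ma) ℝ)
    (ι : Fin ma → Fin m) (hι : Function.Injective ι)
    (hLa : ∀ i j, La i j = if i = ι j then 1 else 0)
    (au : ℕ → Fin ma → ℝ)
    (u : ℕ → Fin m → ℝ)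
    (xe xd ue ud v : ℕ → Fin m → ℝ)
    (hxe0 : xe 0 = 0) (hxd0 : xd 0 = 0)
    (hxe : ∀ k : ℕ, xe (k + 1) = Ae.mulVec (xe k) + Be.mulVec (u k))
    (hue : ∀ k : ℕ, ue k = Ce.mulVec (xe k) + De.mulVec (u k))
    (hv : ∀ k : ℕ, v k = ue k + La.mulVec (au k))
    (hxd : ∀ k : ℕ, xd (k + 1) = Ad.mulVec (xd k) + Bd.mulVec (v k))
    (hud : ∀ k : ℕ, ud k = Cd.mulVec (xd k) + Dd.mulVec (v k)) :
    ∀ k : ℕ,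
      ud k = u k + (Dd * La).mulVec (au k)
        + ∑ j ∈ Finset.range k, (Cd * Ad ^ (k - 1 - j) * Bd * La).mulVec (au j) := by
  have hTdet : IsUnit T.det := (Matrix.isUnit_iff_isUnit_det T).mp hT
  have hDedet : IsUnit De.det := (Matrix.isUnit_iff_isUnit_det De).mp hDe
  have hTT : T * T⁻¹ = 1 := Matrix.mul_nonsing_inv T hTdet
  have hDdDe : Dd * De = 1 := by rw [hDd]; exact Matrix.nonsing_inv_mul De hDedet
  have hTA : Ad * T + Bd * Ce = T * Ae := by
    rw [← hA, mul_add]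
    simp only [← mul_assoc]
    simp only [hTT, one_mul]
  have hTB : Bd * De = T * Be := by
    rw [← hB]
    simp only [← mul_assoc]
    rw [hTT, one_mul]
  have key : ∀ k : ℕ, xd k = T.mulVec (xe k)
      + ∑ j ∈ Finset.range k, (Ad ^ (k - 1 - j) * Bd * La).mulVec (au j) := by
    intro k
    induction k with
    | zero => simp [hxd0, hxe0]
    | succ k ih =>
      have hterm : ∀ j ∈ Finset.range k,
          (Ad ^ (k + 1 - 1 - j) * Bd * La).mulVec (au j)
            = Ad.mulVec ((Ad ^ (k - 1 - j) * Bd * La).mulVec (au j)) := by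
        intro j hj
        have hjk : j < k := Finset.mem_range.mp hj
        have h : k + 1 - 1 - j = (k - 1 - j) + 1 := by omega
        rw [Matrix.mulVec_mulVec, h, pow_succ']; simp only [Matrix.mul_assoc]
      have hsum : ∑ j ∈ Finset.range (k + 1), (Ad ^ (k + 1 - 1 - j) * Bd * La).mulVec (au j)
          = Ad.mulVec (∑ j ∈ Finset.range k, (Ad ^ (k - 1 - j) * Bd * La).mulVec (au j))
            + (Bd * La).mulVec (au k) := by
        rw [Finset.sum_range_succ, Finset.sum_congr rfl hterm, mulVec_sum']
        congr 1
        have h0 : k + 1 - 1 - k = 0 := by omega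
        rw [h0, pow_zero, one_mul]
      rw [hxd, ih, hv, hue, hxe, hsum]
      simp only [Matrix.mulVec_add, Matrix.add_mulVec, Matrix.mulVec_mulVec]
      rw [← hTA, ← hTB]
      simp only [Matrix.add_mulVec, Matrix.mulVec_mulVec]
      abel
  intro k
  rw [hud, key k, hv, hue]
  have hsum : Cd.mulVec (∑ j ∈ Finset.range k, (Ad ^ (k - 1 - j) * Bd * La).mulVec (au j))
      = ∑ j ∈ Finset.range k, (Cd * Ad ^ (k - 1 - j) * Bd * La).mulVec (au j) := by
    rw [mulVec_sum']
    refine Finset.sum_congr rfl fun j hj => ?_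
    rw [Matrix.mulVec_mulVec, ← Matrix.mul_assoc, ← Matrix.mul_assoc]
  simp only [Matrix.mulVec_add, Matrix.mulVec_mulVec]
  rw [hsum]
  have h0 : (Cd * T).mulVec (xe k) + (Dd * Ce).mulVec (xe k) = 0 := by
    rw [← Matrix.add_mulVec, show Cd * T + Dd * Ce = 0 by rw [add_comm]; exact hC,
      Matrix.zero_mulVec]
  have h1 : (Dd * De).mulVec (u k) = u k := by rw [hDdDe, Matrix.one_mulVec]
  calc (Cd * T).mulVec (xe k)
        + ∑ j ∈ Finset.range k, (Cd * Ad ^ (k - 1 - j) * Bd * La).mulVec (au j)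
        + ((Dd * Ce).mulVec (xe k) + (Dd * De).mulVec (u k) + (Dd * La).mulVec (au k))
      = ((Cd * T).mulVec (xe k) + (Dd * Ce).mulVec (xe k)) + (Dd * De).mulVec (u k)
        + (Dd * La).mulVec (au k)
        + ∑ j ∈ Finset.range k, (Cd * Ad ^ (k - 1 - j) * Bd * La).mulVec (au j) := by abel
    _ = u k + (Dd * La).mulVec (au k)
        + ∑ j ∈ Finset.range k, (Cd * Ad ^ (k - 1 - j) * Bd * La).mulVec (au j) := by
        rw [h0, h1, zero_add]
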